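/- arXiv:math/0402330 — 2 statements merged into one kernel-verified Lean document; each statement's English description precedes it below -/
import Mathlib

section
/- Let h be a polynomial in k[p] and define h_(n), h_[n] as in the recursions h_(0)=h_[0]=1, h_(n) = -h·h_(n-1) + h_(n-1)', h_[n] = h·h_[n-1] + h_[n-1]'. Then for any ξ < k, the sum over s from ξ to k-1 of C(k,s)·C(s,ξ)·h_[s-ξ]·h_(k-s) equals -C(k,ξ)·h_[k-ξ]. -/
open Polynomial Finset

noncomputable section

variable {k : Type*} [Field k] [CharZero k]

/-- The sequence `h_(n)`:  `h_(0) = 1`, `h_(n) = -h·h_(n-1) + h_(n-1)'`. -/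
def hpar (h : Polynomial k) : ℕ → Polynomial k
  | 0 => 1
  | n + 1 => -h * hpar h n + derivative (hpar h n)

/-- The sequence `h_[n]`:  `h_[0] = 1`, `h_[n] = h·h_[n-1] + h_[n-1]'`. -/
def hbr (h : Polynomial k) : ℕ → Polynomial k
  | 0 => 1
  | n + 1 => h * hbr h n + derivative (hbr h n)

lemma S_succ (h : Polynomial k) (n : ℕ) :
    ∑ j ∈ range (n+2), (((n+1).choose j : ℕ) : Polynomial k) * hbr h j * hpar h (n+1-j)
    = derivative (∑ j ∈ range (n+1), ((n.choose j : ℕ) : Polynomial k) * hbr h j * hpar h (n-j)) := by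
  rw [derivative_sum]
  have LHS : ∑ j ∈ range (n+2), (((n+1).choose j : ℕ) : Polynomial k) * hbr h j * hpar h (n+1-j)
      = (∑ i ∈ range (n+1), ((n.choose i : ℕ) : Polynomial k) * hbr h (i+1) * hpar h (n-i))
        + ∑ j ∈ range (n+1), ((n.choose j : ℕ) : Polynomial k) * hbr h j * hpar h (n+1-j) := by
    rw [Finset.sum_range_succ' (fun j => (((n+1).choose j : ℕ) : Polynomial k) * hbr h j * hpar h (n+1-j)) (n+1)]
    have split : ∀ i ∈ range (n+1),
        (((n+1).choose (i+1) : ℕ) : Polynomial k) * hbr h (i+1) * hpar h (n+1-(i+1))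
        = ((n.choose i : ℕ) : Polynomial k) * hbr h (i+1) * hpar h (n-i)
          + ((n.choose (i+1) : ℕ) : Polynomial k) * hbr h (i+1) * hpar h (n-i) := by
      intro i _
      rw [Nat.choose_succ_succ, Nat.succ_sub_succ]
      push_cast
      ring
    rw [Finset.sum_congr rfl split, Finset.sum_add_distrib]
    have e2 : ∑ j ∈ range (n+1), ((n.choose j : ℕ) : Polynomial k) * hbr h j * hpar h (n+1-j)
        = (∑ i ∈ range (n+1), ((n.choose (i+1) : ℕ) : Polynomial k) * hbr h (i+1) * hpar h (n-i))
          + ((n.choose 0 : ℕ) : Polynomial k) * hbr h 0 * hpar h (n+1) := by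
      rw [Finset.sum_range_succ' (fun j => ((n.choose j : ℕ) : Polynomial k) * hbr h j * hpar h (n+1-j)) n,
        Finset.sum_range_succ (fun i => ((n.choose (i+1) : ℕ) : Polynomial k) * hbr h (i+1) * hpar h (n-i)) n]
      simp [Nat.succ_sub_succ, Nat.choose_succ_self]
    rw [e2]
    simp [hbr]
    ring
  rw [LHS, ← Finset.sum_add_distrib]
  apply Finset.sum_congr rfl
  intro j hj
  have hjle : j ≤ n := Nat.lt_succ_iff.mp (Finset.mem_range.mp hj)
  have h1 : n + 1 - j = (n - j) + 1 := by omega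
  rw [h1]
  simp only [hbr, hpar, derivative_mul, derivative_natCast, derivative_mul]
  ring

lemma S_zero (h : Polynomial k) (n : ℕ) (hn : n ≠ 0) :
    ∑ j ∈ range (n+1), ((n.choose j : ℕ) : Polynomial k) * hbr h j * hpar h (n-j) = 0 := by
  induction n with
  | zero => exact absurd rfl hn
  | succ m ih =>
    rw [show m + 1 + 1 = m + 2 from rfl, S_succ]
    rcases Nat.eq_zero_or_pos m with hm | hm
    · subst hm; simp [hbr, hpar]
    · rw [ih (by omega)]; simp

theorem sum_hbr_hpar_eq_neg (h : Polynomial k) (K ξ : ℕ) (hlt : ξ < K) :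
    ∑ s ∈ Finset.Ico ξ K,
        (((K.choose s * s.choose ξ : ℕ) : Polynomial k) * hbr h (s - ξ) * hpar h (K - s))
      = -((K.choose ξ : Polynomial k) * hbr h (K - ξ)) := by
  set m := K - ξ with hm
  have hK : K = ξ + m := by omega
  have key : ∑ j ∈ range (m+1), ((m.choose j : ℕ) : Polynomial k) * hbr h j * hpar h (m-j) = 0 :=
    S_zero h m (by omega)
  rw [Finset.sum_range_succ] at key
  simp only [Nat.choose_self, Nat.sub_self, Nat.cast_one, one_mul] at key
  have hpar0 : hpar h 0 = 1 := rfl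
  rw [hpar0, mul_one] at key
  have reidx : ∑ s ∈ Finset.Ico ξ K,
        (((K.choose s * s.choose ξ : ℕ) : Polynomial k) * hbr h (s - ξ) * hpar h (K - s))
      = ∑ j ∈ range m, (((K.choose (ξ+j) * (ξ+j).choose ξ : ℕ) : Polynomial k) * hbr h j * hpar h (m - j)) := by
    rw [Finset.sum_Ico_eq_sum_range]
    apply Finset.sum_congr (by rw [hm]) 
    intro j hj
    have h1 : ξ + j - ξ = j := by omega
    have h2 : K - (ξ + j) = m - j := by omega
    rw [h1, h2]
  rw [reidx]
  have cmul : ∀ j ∈ range m, (((K.choose (ξ+j) * (ξ+j).choose ξ : ℕ) : Polynomial k) * hbr h j * hpar h (m - j))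
      = ((K.choose ξ : ℕ) : Polynomial k) * (((m.choose j : ℕ) : Polynomial k) * hbr h j * hpar h (m - j)) := by
    intro j hj
    have hj' : j < m := Finset.mem_range.mp hj
    have := Nat.choose_mul (n := K) (k := ξ + j) (s := ξ) (by omega)
    rw [show K - ξ = m from rfl, show ξ + j - ξ = j by omega] at this
    rw [this]
    push_cast
    ring
  have key2 : ∑ j ∈ range m, ((m.choose j : ℕ) : Polynomial k) * hbr h j * hpar h (m-j)
      = -hbr h m := eq_neg_of_add_eq_zero_left key
  rw [Finset.sum_congr rfl cmul, ← Finset.mul_sum, key2]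
  ring
end
end

section
/- Let W be the first Weyl algebra over an algebraically closed field k of characteristic zero. Every ∂_q-invariant automorphism θ of M_N(W) satisfies θ(p) = p + α for some scalar α ∈ k, and θ(q) = q - B(p) for some matrix B(p) ∈ M_N(k[p]). -/
open Polynomial

set_option synthInstance.maxHeartbeats 1000000
set_option maxHeartbeats 1000000

noncomputable section

variable (k : Type*) [Field k] [CharZero k]

/-- The operator `p`: multiplication by `X` on `k[X]`. -/
def pOp : Module.End k (Polynomial k) := LinearMap.mulLeft k (X : Polynomial k)

/-- The operator `q = d/dX` on `k[X]`. -/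
def qOp : Module.End k (Polynomial k) := derivative

/-- The (first) Weyl algebra, realized concretely as the subalgebra of
`End_k(k[X])` generated by multiplication by `X` and `d/dX`.  (In characteristic
zero this is a faithful model of `k⟨p,q | qp - pq = 1⟩`.) -/
def WeylA : Subalgebra k (Module.End k (Polynomial k)) :=
  Algebra.adjoin k {pOp k, qOp k}

/-- The element `p` of the Weyl algebra. -/
def pW : WeylA k := ⟨pOp k, Algebra.subset_adjoin (Set.mem_insert _ _)⟩

/-- The element `q` of the Weyl algebra. -/
def qW : WeylA k := ⟨qOp k, Algebra.subset_adjoin (Set.mem_insert_of_mem _ rfl)⟩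

variable (N : ℕ)

/-- `M_N(W)`, the `N×N` matrices over the Weyl algebra. -/
abbrev MW := Matrix (Fin N) (Fin N) (WeylA k)

/-- The scalar matrix `p·Id_N`. -/
def pM : MW k N := Matrix.diagonal fun _ => pW k

/-- The scalar matrix `q·Id_N`. -/
def qM : MW k N := Matrix.diagonal fun _ => qW k

/-- The derivation `∂_q(a) = [a,p]` on `M_N(W)`. -/
def dq (a : MW k N) : MW k N := a * pM k N - pM k N * a

/-- Evaluation of a polynomial at `p`, i.e. the embedding `k[p] → W`. -/
def polyP : Polynomial k →ₐ[k] WeylA k := Polynomial.aeval (pW k)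

/-- Evaluation of a polynomial at `q`, i.e. the embedding `k[q] → W`. -/
def polyQ : Polynomial k →ₐ[k] WeylA k := Polynomial.aeval (qW k)

/- ### Auxiliary lemmas -/

variable {k}

lemma commute_aeval_aux {A : Type*} [Semiring A] [Algebra k A] {w x : A}
    (h : Commute w x) (f : Polynomial k) : Commute w (aeval x f) := by
  induction f using Polynomial.induction_on' with
  | add p q hp hq => simpa [map_add] using hp.add_right hq
  | monomial n a =>
    rw [aeval_monomial]
    exact (show Commute w (algebraMap k A a) from (Algebra.commutes a w).symm).mul_right
      (h.pow_right n)

lemma aeval_pOp_eq_mulLeft (g : Polynomial k) :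
    aeval (pOp k) g = LinearMap.mulLeft k g := by
  have h1 : pOp k = (Algebra.lmul k (Polynomial k)) X := rfl
  rw [h1, aeval_algHom_apply, aeval_X_left_apply]
  rfl

lemma commute_pOp_eq_mulLeft (w : Module.End k (Polynomial k))
    (h : Commute w (pOp k)) : w = LinearMap.mulLeft k (w 1) := by
  apply LinearMap.ext
  intro f
  have hf : Commute w (LinearMap.mulLeft k f) := by
    rw [← aeval_pOp_eq_mulLeft]; exact commute_aeval_aux h f
  have h2 := LinearMap.congr_fun hf 1
  simp only [Module.End.mul_apply, LinearMap.mulLeft_apply, mul_one] at h2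
  rw [LinearMap.mulLeft_apply, h2, mul_comm]

lemma commute_pq_scalar (w : Module.End k (Polynomial k))
    (hp : Commute w (pOp k)) (hq : Commute w (qOp k)) :
    ∃ α : k, w = algebraMap k (Module.End k (Polynomial k)) α := by
  have hw := commute_pOp_eq_mulLeft w hp
  set g := w 1 with hg
  have happ : w ((qOp k) X) = (qOp k) (w X) := LinearMap.congr_fun hq X
  have hX : w X = g * X := by rw [hw]; simp [LinearMap.mulLeft_apply]
  have h1 : (qOp k) X = (1 : Polynomial k) := by simp [qOp]
  rw [h1, hX] at happ
  have hw1 : w 1 = g := rfl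
  rw [hw1] at happ
  have hder : derivative (g * X) = derivative g * X + g := by
    rw [derivative_mul, derivative_X, mul_one]
  rw [show (qOp k) (g * X) = derivative (g * X) from rfl, hder] at happ
  have hdg : derivative g * X = 0 := right_eq_add.mp happ
  have hder0 : derivative g = 0 := by
    rcases mul_eq_zero.mp hdg with h | h
    · exact h
    · exact absurd h X_ne_zero
  obtain ⟨a, ha⟩ : ∃ a : k, g = C a := ⟨g.coeff 0, eq_C_of_derivative_eq_zero hder0⟩
  refine ⟨a, ?_⟩
  apply LinearMap.ext
  intro f
  rw [hw]
  simp only [LinearMap.mulLeft_apply]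
  rw [ha, Module.algebraMap_end_apply, Polynomial.smul_eq_C_mul]

lemma weyl_commute_scalar (w : WeylA k) (hp : Commute w (pW k)) (hq : Commute w (qW k)) :
    ∃ α : k, w = algebraMap k (WeylA k) α := by
  have hp' : Commute (w : Module.End k (Polynomial k)) (pOp k) := by
    have := congrArg Subtype.val hp
    exact this
  have hq' : Commute (w : Module.End k (Polynomial k)) (qOp k) := by
    have := congrArg Subtype.val hq
    exact this
  obtain ⟨a, ha⟩ := commute_pq_scalar _ hp' hq'
  refine ⟨a, Subtype.ext ?_⟩
  rw [ha]
  rfl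

lemma weyl_rel : qW k * pW k - pW k * qW k = 1 := by
  apply Subtype.ext
  show (qW k : Module.End k (Polynomial k)) * (pW k : Module.End k (Polynomial k))
      - (pW k : Module.End k (Polynomial k)) * (qW k : Module.End k (Polynomial k)) = 1
  apply LinearMap.ext
  intro f
  simp only [LinearMap.sub_apply, Module.End.mul_apply, Module.End.one_apply]
  change qOp k (pOp k f) - pOp k (qOp k f) = f
  simp only [qOp, pOp, LinearMap.mulLeft_apply]
  rw [derivative_mul, derivative_X]
  ring

lemma central_scalar {N : ℕ} (hN : 0 < N) (c : MW k N) (hc : ∀ b : MW k N, b * c = c * b) :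
    ∃ α : k, c = algebraMap k (MW k N) α := by
  obtain ⟨d, hd⟩ := Matrix.mem_range_scalar_of_commute_single
    (M := c) (fun i j _ => hc _)
  have i0 : Fin N := ⟨0, hN⟩
  have hcomm : ∀ w : WeylA k, Commute w d := by
    intro w
    have h1 := hc (Matrix.scalar (Fin N) w)
    rw [← hd] at h1
    have h2 := congrArg (fun m : MW k N => m i0 i0) h1
    simpa [Matrix.scalar_apply, Matrix.diagonal_mul_diagonal, commute_iff_eq] using h2
  obtain ⟨α, hα⟩ := weyl_commute_scalar d (hcomm (pW k)).symm (hcomm (qW k)).symm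
  refine ⟨α, ?_⟩
  rw [← hd, hα]
  rw [Matrix.algebraMap_eq_diagonal]
  rfl

lemma entry_commute_pOp_eq_polyP (w : WeylA k)
    (h : w * pW k = pW k * w) : w = polyP k ((w : Module.End k (Polynomial k)) 1) := by
  have h' : Commute (w : Module.End k (Polynomial k)) (pOp k) := by
    have := congrArg Subtype.val h
    exact this
  have hw := commute_pOp_eq_mulLeft _ h'
  apply Subtype.ext
  have : ((polyP k ((w : Module.End k (Polynomial k)) 1)) : Module.End k (Polynomial k))
      = aeval (pOp k) ((w : Module.End k (Polynomial k)) 1) := by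
    rw [polyP]
    exact (aeval_algHom_apply (WeylA k).val (pW k) _).symm
  rw [this, aeval_pOp_eq_mulLeft]
  exact hw

set_option maxHeartbeats 2000000
set_option synthInstance.maxHeartbeats 2000000

lemma comm_shuffle₁ {A : Type*} [Ring A] {b x y : A}
    (h : b * x - x * b = b * y - y * b) : b * (x - y) = (x - y) * b := by
  have h2 : b * (x - y) - (x - y) * b = (b * x - x * b) - (b * y - y * b) := by
    noncomm_ring
  rw [h, sub_self] at h2
  exact sub_eq_zero.mp h2

lemma comm_shuffle₂ {A : Type*} [Ring A] {x y P : A}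
    (h : x * P - P * x = y * P - P * y) : (x - y) * P = P * (x - y) := by
  have h2 : (x - y) * P - P * (x - y) = (x * P - P * x) - (y * P - P * y) := by
    noncomm_ring
  rw [h, sub_self] at h2
  exact sub_eq_zero.mp h2

lemma zero_sub_zero' {A : Type*} [Ring A] : (0:A) - 0 = 0 := sub_zero 0

lemma eq_add_self_sub' {A : Type*} [Ring A] (x y : A) : x = y + (x - y) := by abel

lemma eq_sub_neg_self_sub {A : Type*} [Ring A] (x y : A) : x = y - -(x - y) := by abel

variable (k)

/-- Lemma 3.3.3: every `∂_q`-invariant automorphism `θ` of `M_N(W)` satisfies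
`θ(p) = p + α` for a scalar `α` and `θ(q) = q - B(p)` for some
`B(p) ∈ M_N(k[p])`. -/
theorem dq_invariant_automorphism_p_q [IsAlgClosed k] (N : ℕ) (hN : 0 < N)
    (θ : MW k N ≃ₐ[k] MW k N)
    (hθ : ∀ a : MW k N, θ (dq k N a) = dq k N (θ a)) :
    (∃ α : k, θ (pM k N) = pM k N + algebraMap k (MW k N) α) ∧
    (∃ B : Matrix (Fin N) (Fin N) (Polynomial k),
        θ (qM k N) = qM k N - B.map (polyP k)) := by
  constructor
  · -- part 1
    have hc : ∀ b : MW k N,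
        b * (θ (pM k N) - pM k N) = (θ (pM k N) - pM k N) * b := by
      intro b
      have h0 := hθ (θ.symm b)
      rw [dq, dq] at h0
      rw [AlgEquiv.apply_symm_apply] at h0
      have h3 : θ (θ.symm b * pM k N) = b * θ (pM k N) := by
        rw [map_mul, AlgEquiv.apply_symm_apply]
      have h4 : θ (pM k N * θ.symm b) = θ (pM k N) * b := by
        rw [map_mul, AlgEquiv.apply_symm_apply]
      have hms := map_sub θ (θ.symm b * pM k N) (pM k N * θ.symm b)
      rw [h3, h4] at hms
      -- hms : θ (θ.symm b * pM - pM * θ.symm b) = b * θ pM - θ pM * b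
      have h5 : b * θ (pM k N) - θ (pM k N) * b = b * pM k N - pM k N * b := by
        rw [← hms]
        exact h0
      exact comm_shuffle₁ (A := MW k N) h5
    obtain ⟨α, hα⟩ := central_scalar hN (θ (pM k N) - pM k N) hc
    refine ⟨α, ?_⟩
    rw [← hα]
    exact eq_add_self_sub' (A := MW k N) (θ (pM k N)) (pM k N)
  · -- part 2
    have hrel : qM k N * pM k N - pM k N * qM k N = 1 := by
      funext i j
      rw [Matrix.sub_apply]
      rw [qM, pM, Matrix.diagonal_mul_diagonal, Matrix.diagonal_mul_diagonal]
      rcases eq_or_ne i j with rfl | hij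
      · rw [Matrix.diagonal_apply_eq, Matrix.diagonal_apply_eq, Matrix.one_apply_eq]
        exact weyl_rel
      · rw [Matrix.diagonal_apply_ne _ hij, Matrix.diagonal_apply_ne _ hij,
          Matrix.one_apply_ne hij]
        exact zero_sub_zero' (A := WeylA k)
    have hdqq : dq k N (qM k N) = 1 := by rw [dq]; exact hrel
    have h1 := hθ (qM k N)
    rw [hdqq, map_one, dq] at h1
    -- h1 : 1 = θ qM * pM - pM * θ qM
    have h5 : θ (qM k N) * pM k N - pM k N * θ (qM k N)
        = qM k N * pM k N - pM k N * qM k N := by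
      rw [← h1, hrel]
    have hcp := comm_shuffle₂ (A := MW k N) h5
    have hentry : ∀ i j, (θ (qM k N) - qM k N) i j * pW k
        = pW k * (θ (qM k N) - qM k N) i j := by
      intro i j
      have h2 : ((θ (qM k N) - qM k N) * pM k N) i j
          = (θ (qM k N) - qM k N) i j * pW k := by
        rw [pM, Matrix.mul_diagonal]
      have h3 : (pM k N * (θ (qM k N) - qM k N)) i j
          = pW k * (θ (qM k N) - qM k N) i j := by
        rw [pM, Matrix.diagonal_mul]
      rw [← h2, ← h3, hcp]
    refine ⟨fun i j =>
      -(((θ (qM k N) - qM k N) i j : Module.End k (Polynomial k)) 1), ?_⟩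
    have hB : (Matrix.map (fun i j =>
        -(((θ (qM k N) - qM k N) i j : Module.End k (Polynomial k)) 1) :
        Matrix (Fin N) (Fin N) (Polynomial k)) (polyP k)) = -(θ (qM k N) - qM k N) := by
      funext i j
      change polyP k (-(((θ (qM k N) - qM k N) i j : Module.End k (Polynomial k)) 1))
        = -((θ (qM k N) - qM k N) i j)
      rw [map_neg]
      rw [← entry_commute_pOp_eq_polyP ((θ (qM k N) - qM k N) i j) (hentry i j)]
    rw [hB]
    exact eq_sub_neg_self_sub (A := MW k N) (θ (qM k N)) (qM k N)

end
end
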